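/- (Generalized Witt decomposition.) Let V be a finite-dimensional real vector space, B a nondegenerate symmetric bilinear form on V, and F ⊆ V a linear subspace. Then there exist subspaces E, W, U, E* of V such that V = E ⊕ W ⊕ U ⊕ E* (internal direct sum), E = F ∩ F^⊥, E ⊕ W = F, E ⊕ U = F^⊥, both E and E* are totally isotropic, B(U,W) = 0, and B(E ⊕ E*, U ⊕ W) = 0. -/

import Mathlib

open Module FiniteDimensional LinearMap.BilinForm Submodule

/-- Any subspace `p` of `q` admits a complement within `q`. -/
lemma exists_compl_within {V : Type*} [AddCommGroup V] [Module ℝ V]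
    (p q : Submodule ℝ V) (h : p ≤ q) :
    ∃ r : Submodule ℝ V, r ≤ q ∧ p ⊓ r = ⊥ ∧ p ⊔ r = q := by
  obtain ⟨r', hr'⟩ := Submodule.exists_isCompl (p.comap q.subtype)
  have hp : (p.comap q.subtype).map q.subtype = p := by
    rw [Submodule.map_comap_subtype, inf_eq_right.mpr h]
  refine ⟨r'.map q.subtype, Submodule.map_subtype_le q r', ?_, ?_⟩
  · rw [← hp, ← Submodule.map_inf _ (Submodule.injective_subtype q), hr'.inf_eq_bot,
      Submodule.map_bot]
  · rw [← hp, ← Submodule.map_sup, hr'.sup_eq_top, Submodule.map_top, Submodule.range_subtype]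

/-- **generalized Witt decomposition.** Given a nondegenerate symmetric
bilinear form `B` on a finite-dimensional real vector space `V` and a subspace `F`, there is
a decomposition `V = E ⊕ W ⊕ U ⊕ E*` with `E = F ∩ F^⊥`, `E ⊕ W = F`, `E ⊕ U = F^⊥`, `E` and
`E*` totally isotropic, `U ⟂ W` and `(E ⊕ E*) ⟂ (U ⊕ W)`. -/
theorem generalized_witt_decomposition
    (V : Type*) [AddCommGroup V] [Module ℝ V] [FiniteDimensional ℝ V]
    (B : LinearMap.BilinForm ℝ V)
    (hBnd : B.Nondegenerate)
    (hBsymm : ∀ x y : V, B x y = B y x)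
    (F : Submodule ℝ V) :
    ∃ E W U E' : Submodule ℝ V,
      DirectSum.IsInternal (![E, W, U, E'] : Fin 4 → Submodule ℝ V) ∧
      E = F ⊓ B.orthogonal F ∧
      E ⊔ W = F ∧
      E ⊔ U = B.orthogonal F ∧
      (∀ x ∈ E, ∀ y ∈ E, B x y = 0) ∧
      (∀ x ∈ E', ∀ y ∈ E', B x y = 0) ∧
      (∀ x ∈ U, ∀ y ∈ W, B x y = 0) ∧
      (∀ x ∈ E ⊔ E', ∀ y ∈ U ⊔ W, B x y = 0) := by
  have hRefl : B.IsRefl := fun x y hxy => by rw [hBsymm]; exact hxy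
  set Fp := B.orthogonal F with hFp
  set E := F ⊓ Fp with hE
  have hEF : E ≤ F := inf_le_left
  have hEFp : E ≤ Fp := inf_le_right
  obtain ⟨W, hWF, hEWinf, hEWsup⟩ := exists_compl_within E F hEF
  obtain ⟨U, hUFp, hEUinf, hEUsup⟩ := exists_compl_within E Fp hEFp
  -- basic orthogonality facts
  have hFFp : ∀ x ∈ F, ∀ y ∈ Fp, B x y = 0 := fun x hx y hy => hy x hx
  have hFpF : ∀ x ∈ Fp, ∀ y ∈ F, B x y = 0 := fun x hx y hy => hRefl y x (hFFp y hy x hx)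
  have hEiso : ∀ x ∈ E, ∀ y ∈ E, B x y = 0 := fun x hx y hy => hFFp x hx.1 y hy.2
  set P := W ⊔ U with hP
  set Z := B.orthogonal P with hZ
  -- P ∩ Z = 0
  have hdisjPZ : Disjoint P Z := by
    rw [Submodule.disjoint_def]
    intro v hvP hvZ
    obtain ⟨w, hw, u, hu, rfl⟩ := Submodule.mem_sup.mp hvP
    have hw0 : w = 0 := by
      have hwE : w ∈ E := by
        refine ⟨hWF hw, ?_⟩
        intro n hnF
        rw [← hEWsup] at hnF
        obtain ⟨e, he, w', hw', rfl⟩ := Submodule.mem_sup.mp hnF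
        have h1 : B e w = 0 := hFpF e (hEFp he) w (hWF hw)
        have h2 : B w' w = 0 := by
          have h3 : B w' (w + u) = 0 := hvZ w' (Submodule.mem_sup_left hw')
          have h4 : B w' u = 0 := hFFp w' (hWF hw') u (hUFp hu)
          rw [map_add, h4] at h3; linarith
        show B (e + w') w = 0
        rw [map_add, LinearMap.add_apply, h1, h2, add_zero]
      have : w ∈ E ⊓ W := ⟨hwE, hw⟩
      rwa [hEWinf, Submodule.mem_bot] at this
    have hu0 : u = 0 := by
      have huE : u ∈ E := by
        refine ⟨?_, hUFp hu⟩
        have horth2 : B.orthogonal Fp = F := by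
          rw [hFp]; exact B.orthogonal_orthogonal hBnd hRefl F
        rw [← horth2]
        intro n hnFp
        rw [← hEUsup] at hnFp
        obtain ⟨e, he, u', hu', rfl⟩ := Submodule.mem_sup.mp hnFp
        have h1 : B e u = 0 := hFFp e (hEF he) u (hUFp hu)
        have h2 : B u' u = 0 := by
          have h3 : B u' (w + u) = 0 := hvZ u' (Submodule.mem_sup_right hu')
          rw [hw0, zero_add] at h3; exact h3
        show B (e + u') u = 0
        rw [map_add, LinearMap.add_apply, h1, h2, add_zero]
      have : u ∈ E ⊓ U := ⟨huE, hu⟩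
      rwa [hEUinf, Submodule.mem_bot] at this
    rw [hw0, hu0, add_zero]
  have hPZ0 : ∀ x, x ∈ P → x ∈ Z → x = 0 := Submodule.disjoint_def.mp hdisjPZ
  have hPcompl : IsCompl P Z :=
    (LinearMap.BilinForm.isCompl_orthogonal_iff_disjoint hRefl).mpr hdisjPZ
  -- E ≤ Z
  have hEZ : E ≤ Z := by
    intro e he n hn
    obtain ⟨w, hw, u, hu, rfl⟩ := Submodule.mem_sup.mp hn
    have h1 : B w e = 0 := hFFp w (hWF hw) e he.2
    have h2 : B u e = 0 := hFpF u (hUFp hu) e he.1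
    show B (w + u) e = 0
    rw [map_add, LinearMap.add_apply, h1, h2, add_zero]
  obtain ⟨C, hCZ, hECinf, hECsup⟩ := exists_compl_within E Z hEZ
  -- dimension count
  have dWU : W ⊓ U = ⊥ := by
    rw [eq_bot_iff]
    intro x hx
    have hxE : x ∈ E := ⟨hWF hx.1, hUFp hx.2⟩
    have : x ∈ E ⊓ W := ⟨hxE, hx.1⟩
    rwa [hEWinf] at this
  have d1 : finrank ℝ E + finrank ℝ W = finrank ℝ F := by
    have h := Submodule.finrank_sup_add_finrank_inf_eq E W
    rw [hEWinf, hEWsup, finrank_bot, add_zero] at h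
    omega
  have d2 : finrank ℝ E + finrank ℝ U = finrank ℝ Fp := by
    have h := Submodule.finrank_sup_add_finrank_inf_eq E U
    rw [hEUinf, hEUsup, finrank_bot, add_zero] at h
    omega
  have d3 : finrank ℝ W + finrank ℝ U = finrank ℝ P := by
    have h := Submodule.finrank_sup_add_finrank_inf_eq W U
    rw [dWU, finrank_bot, add_zero] at h
    rw [hP]; omega
  have d4 : finrank ℝ Fp = finrank ℝ V - finrank ℝ F :=
    LinearMap.BilinForm.finrank_orthogonal hBnd F
  have d5 : finrank ℝ Z = finrank ℝ V - finrank ℝ P :=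
    LinearMap.BilinForm.finrank_orthogonal hBnd P
  have d6 : finrank ℝ E + finrank ℝ C = finrank ℝ Z := by
    have h := Submodule.finrank_sup_add_finrank_inf_eq E C
    rw [hECinf, hECsup, finrank_bot, add_zero] at h
    omega
  have dFV : finrank ℝ F ≤ finrank ℝ V := Submodule.finrank_le F
  have dPV : finrank ℝ P ≤ finrank ℝ V := Submodule.finrank_le P
  have dCE : finrank ℝ C = finrank ℝ E := by omega
  -- the dual pairing map
  set A : E →ₗ[ℝ] Module.Dual ℝ C := C.subtype.dualMap ∘ₗ B.flip ∘ₗ E.subtype with hA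
  have hAapp : ∀ (e : E) (c : C), A e c = B c e := fun e c => rfl
  have hAinj : Function.Injective A := by
    rw [injective_iff_map_eq_zero]
    intro e hAe
    have hz : ∀ z ∈ Z, B z (e : V) = 0 := by
      intro z hzZ
      rw [← hECsup] at hzZ
      obtain ⟨e', he', c, hc, rfl⟩ := Submodule.mem_sup.mp hzZ
      have h1 : B e' (e : V) = 0 := hEiso e' he' e e.2
      have h2 : B c (e : V) = 0 := by
        have := congrFun (congrArg DFunLike.coe hAe) ⟨c, hc⟩
        simpa [hAapp] using this
      rw [map_add, LinearMap.add_apply, h1, h2, add_zero]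
    have heP : (e : V) ∈ P := by
      have h : (e : V) ∈ B.orthogonal Z := fun n hn => hz n hn
      have horth2 : B.orthogonal Z = P := by
        rw [hZ]; exact B.orthogonal_orthogonal hBnd hRefl P
      rwa [horth2] at h
    have : (e : V) = 0 := hPZ0 _ heP (hEZ e.2)
    exact Subtype.ext this
  have hAsurj : Function.Surjective A := by
    have hfr : finrank ℝ E = finrank ℝ (Module.Dual ℝ C) := by
      rw [Subspace.dual_finrank_eq, dCE]
    exact (LinearMap.injective_iff_surjective_of_finrank_eq_finrank hfr).mp hAinj
  set Aeq := LinearEquiv.ofBijective A ⟨hAinj, hAsurj⟩ with hAeq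
  set ψ : C →ₗ[ℝ] Module.Dual ℝ C :=
    (1/2 : ℝ) • (C.subtype.dualMap ∘ₗ B.domRestrict C) with hψ
  set g : C →ₗ[ℝ] E := Aeq.symm.toLinearMap ∘ₗ ψ with hgdef
  have hg : ∀ c c' : C, B c' (g c) = (1/2 : ℝ) * B c c' := by
    intro c c'
    have h1 : A (g c) = ψ c := Aeq.apply_symm_apply (ψ c)
    have h2 : A (g c) c' = ψ c c' := by rw [h1]
    rw [hAapp] at h2
    exact h2
  set E' := LinearMap.range (C.subtype - E.subtype ∘ₗ g) with hE'
  have hE'mem : ∀ x, x ∈ E' ↔ ∃ c : C, (c : V) - (g c : V) = x := by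
    intro x
    rw [hE', LinearMap.mem_range]
    constructor
    · rintro ⟨c, rfl⟩; exact ⟨c, rfl⟩
    · rintro ⟨c, rfl⟩; exact ⟨c, rfl⟩
  have hE'Z : E' ≤ Z := by
    intro x hx
    obtain ⟨c, rfl⟩ := (hE'mem x).mp hx
    exact sub_mem (hCZ c.2) (hEZ (g c).2)
  have hEE'inf : E ⊓ E' = ⊥ := by
    rw [eq_bot_iff]
    intro x ⟨hxE, hxE'⟩
    obtain ⟨c, rfl⟩ := (hE'mem x).mp hxE'
    have hcE : (c : V) ∈ E := by
      have : (c : V) = ((c : V) - (g c : V)) + (g c : V) := by abel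
      rw [this]
      exact add_mem hxE (g c).2
    have hc0 : (c : V) = 0 := by
      have : (c : V) ∈ E ⊓ C := ⟨hcE, c.2⟩
      rwa [hECinf, Submodule.mem_bot] at this
    have : c = 0 := Subtype.ext hc0
    rw [this]
    simp
  have hEE'sup : E ⊔ E' = Z := by
    refine le_antisymm (sup_le hEZ hE'Z) ?_
    rw [← hECsup]
    refine sup_le le_sup_left ?_
    intro x hx
    have : x = ((g ⟨x, hx⟩ : V)) + (x - (g ⟨x, hx⟩ : V)) := by abel
    rw [this]
    exact Submodule.add_mem _ (Submodule.mem_sup_left (g ⟨x, hx⟩).2)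
      (Submodule.mem_sup_right ((hE'mem _).mpr ⟨⟨x, hx⟩, rfl⟩))
  have hE'iso : ∀ x ∈ E', ∀ y ∈ E', B x y = 0 := by
    intro x hx y hy
    obtain ⟨c, rfl⟩ := (hE'mem x).mp hx
    obtain ⟨c', rfl⟩ := (hE'mem y).mp hy
    have h1 : B (g c) (g c') = 0 := hEiso _ (g c).2 _ (g c').2
    have h2 : B (c : V) (g c') = (1/2 : ℝ) * B c' c := hg c' c
    have h3 : B (g c) (c' : V) = (1/2 : ℝ) * B c c' := by
      rw [hBsymm]; exact hg c c'
    have h4 : B (c : V) (c' : V) = B (c' : V) (c : V) := hBsymm _ _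
    simp only [map_sub, LinearMap.sub_apply]
    rw [h1, h2, h3]
    linarith
  -- membership helpers
  have hWP : W ≤ P := le_sup_left
  have hUP : U ≤ P := le_sup_right
  refine ⟨E, W, U, E', ?_, rfl, hEWsup, hEUsup, hEiso, hE'iso, ?_, ?_⟩
  · -- direct sum
    rw [DirectSum.isInternal_submodule_iff_iSupIndep_and_iSup_eq_top]
    constructor
    · intro i
      fin_cases i
      · -- E vs W ⊔ U ⊔ E'
        refine Disjoint.mono_right (iSup_le fun j => iSup_le fun hj => ?_)
          (Submodule.disjoint_def.mpr ?_ : Disjoint E ((W ⊔ U) ⊔ E'))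
        · fin_cases j
          · exact absurd rfl hj
          · exact le_sup_of_le_left le_sup_left
          · exact le_sup_of_le_left le_sup_right
          · exact le_sup_right
        · intro x hxE hx2
          obtain ⟨p, hp, e', he', rfl⟩ := Submodule.mem_sup.mp hx2
          have hpZ : p ∈ Z := by
            have h := sub_mem (hEZ hxE) (hE'Z he')
            simpa using h
          have hp0 : p = 0 := hPZ0 p hp hpZ
          rw [hp0, zero_add] at hxE ⊢
          have : e' ∈ E ⊓ E' := ⟨hxE, he'⟩
          rwa [hEE'inf, Submodule.mem_bot] at this
      · -- W vs E ⊔ U ⊔ E'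
        refine Disjoint.mono_right (iSup_le fun j => iSup_le fun hj => ?_)
          (Submodule.disjoint_def.mpr ?_ : Disjoint W ((E ⊔ U) ⊔ E'))
        · fin_cases j
          · exact le_sup_of_le_left le_sup_left
          · exact absurd rfl hj
          · exact le_sup_of_le_left le_sup_right
          · exact le_sup_right
        · intro x hxW hx2
          obtain ⟨y, hy, e', he', rfl⟩ := Submodule.mem_sup.mp hx2
          obtain ⟨e, he, u, hu, rfl⟩ := Submodule.mem_sup.mp hy
          have hsub : (e + u + e') - u ∈ P := sub_mem (hWP hxW) (hUP hu)
          have hsubZ : (e + u + e') - u ∈ Z := by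
            have h : e + e' ∈ Z := add_mem (hEZ he) (hE'Z he')
            have heq : e + u + e' - u = e + e' := by abel
            rwa [heq]
          have h0 : (e + u + e') - u = 0 := hPZ0 _ hsub hsubZ
          have hxu : e + u + e' = u := sub_eq_zero.mp h0
          rw [hxu] at hxW ⊢
          have : u ∈ W ⊓ U := ⟨hxW, hu⟩
          rwa [dWU, Submodule.mem_bot] at this
      · -- U vs E ⊔ W ⊔ E'
        refine Disjoint.mono_right (iSup_le fun j => iSup_le fun hj => ?_)
          (Submodule.disjoint_def.mpr ?_ : Disjoint U ((E ⊔ W) ⊔ E'))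
        · fin_cases j
          · exact le_sup_of_le_left le_sup_left
          · exact le_sup_of_le_left le_sup_right
          · exact absurd rfl hj
          · exact le_sup_right
        · intro x hxU hx2
          obtain ⟨y, hy, e', he', rfl⟩ := Submodule.mem_sup.mp hx2
          obtain ⟨e, he, w, hw, rfl⟩ := Submodule.mem_sup.mp hy
          have hsub : (e + w + e') - w ∈ P := sub_mem (hUP hxU) (hWP hw)
          have hsubZ : (e + w + e') - w ∈ Z := by
            have h : e + e' ∈ Z := add_mem (hEZ he) (hE'Z he')
            have heq : e + w + e' - w = e + e' := by abel
            rwa [heq]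
          have h0 : (e + w + e') - w = 0 := hPZ0 _ hsub hsubZ
          have hxw : e + w + e' = w := sub_eq_zero.mp h0
          rw [hxw] at hxU ⊢
          have : w ∈ W ⊓ U := ⟨hw, hxU⟩
          rwa [dWU, Submodule.mem_bot] at this
      · -- E' vs E ⊔ W ⊔ U
        refine Disjoint.mono_right (iSup_le fun j => iSup_le fun hj => ?_)
          (Submodule.disjoint_def.mpr ?_ : Disjoint E' ((E ⊔ W) ⊔ U))
        · fin_cases j
          · exact le_sup_of_le_left le_sup_left
          · exact le_sup_of_le_left le_sup_right
          · exact le_sup_right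
          · exact absurd rfl hj
        · intro x hxE' hx2
          obtain ⟨y, hy, u, hu, rfl⟩ := Submodule.mem_sup.mp hx2
          obtain ⟨e, he, w, hw, rfl⟩ := Submodule.mem_sup.mp hy
          have hsub : (e + w + u) - e ∈ Z := sub_mem (hE'Z hxE') (hEZ he)
          have hsubP : (e + w + u) - e ∈ P := by
            have h : w + u ∈ P := add_mem (hWP hw) (hUP hu)
            have heq : e + w + u - e = w + u := by abel
            rwa [heq]
          have h0 : (e + w + u) - e = 0 := hPZ0 _ hsubP hsub
          have hxe : e + w + u = e := sub_eq_zero.mp h0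
          rw [hxe] at hxE' ⊢
          have : e ∈ E ⊓ E' := ⟨he, hxE'⟩
          rwa [hEE'inf, Submodule.mem_bot] at this
    · -- spanning
      refine le_antisymm le_top ?_
      rw [← hPcompl.sup_eq_top, ← hEE'sup]
      refine sup_le (sup_le ?_ ?_) (sup_le ?_ ?_)
      · simpa using le_iSup (![E, W, U, E'] : Fin 4 → Submodule ℝ V) 1
      · simpa using le_iSup (![E, W, U, E'] : Fin 4 → Submodule ℝ V) 2
      · simpa using le_iSup (![E, W, U, E'] : Fin 4 → Submodule ℝ V) 0
      · simpa using le_iSup (![E, W, U, E'] : Fin 4 → Submodule ℝ V) 3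
  · -- B(U, W) = 0
    intro u hu w hw
    exact hFpF u (hUFp hu) w (hWF hw)
  · -- B(E ⊔ E', U ⊔ W) = 0
    intro x hx y hy
    rw [hEE'sup] at hx
    have hyP : y ∈ P := by
      rw [hP, sup_comm]; exact hy
    exact hRefl y x (hx y hyP)
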